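/- Let m ≥ 4 and b_1, t ∈ K with t b_1 ≠ 1, and take b_2 = 0. Then soc(Λ̃) equals the K-span of {a_0 ā_0, a_1 ā_1, …, a_{m−1} ā_{m−1}} in Λ̃, and there is a K-algebra isomorphism Λ̃/soc(Λ̃) ≅ Λ/soc(Λ); that is, Λ̃ is a socle deformation of Λ. -/

import Mathlib

open scoped BigOperators

noncomputable section
set_option linter.unusedSectionVars false
set_option maxHeartbeats 1000000

/-- Generators of the path algebra: trivial paths `e i`, arrows `a i : i → i+1`
and `abar i : i+1 → i`. -/
inductive Gen (m : ℕ) : Type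
  | e : ZMod m → Gen m
  | a : ZMod m → Gen m
  | abar : ZMod m → Gen m

/-- The free associative algebra on the generators. -/
abbrev FA (K : Type) [Field K] (m : ℕ) : Type := FreeAlgebra K (Gen m)

def Ee (K : Type) [Field K] (m : ℕ) (i : ZMod m) : FA K m := FreeAlgebra.ι K (Gen.e i)
def Aa (K : Type) [Field K] (m : ℕ) (i : ZMod m) : FA K m := FreeAlgebra.ι K (Gen.a i)
def Bb (K : Type) [Field K] (m : ℕ) (i : ZMod m) : FA K m := FreeAlgebra.ι K (Gen.abar i)

/-- The defining relations of the path algebra KQ. -/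
inductive PathRel (K : Type) [Field K] (m : ℕ) [NeZero m] : FA K m → FA K m → Prop
  | orth : ∀ i j : ZMod m, i ≠ j → PathRel K m (Ee K m i * Ee K m j) 0
  | idem : ∀ i : ZMod m, PathRel K m (Ee K m i * Ee K m i) (Ee K m i)
  | total : PathRel K m (∑ i : ZMod m, Ee K m i) 1
  | asrc : ∀ i : ZMod m, PathRel K m (Ee K m i * Aa K m i) (Aa K m i)
  | atgt : ∀ i : ZMod m, PathRel K m (Aa K m i * Ee K m (i + 1)) (Aa K m i)
  | bsrc : ∀ i : ZMod m, PathRel K m (Ee K m (i + 1) * Bb K m i) (Bb K m i)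
  | btgt : ∀ i : ZMod m, PathRel K m (Bb K m i * Ee K m i) (Bb K m i)

/-- The path algebra KQ. -/
abbrev PathAlg (K : Type) [Field K] (m : ℕ) [NeZero m] : Type := RingQuot (PathRel K m)

def pe (K : Type) [Field K] (m : ℕ) [NeZero m] (i : ZMod m) : PathAlg K m :=
  RingQuot.mkAlgHom K (PathRel K m) (Ee K m i)
def pa (K : Type) [Field K] (m : ℕ) [NeZero m] (i : ZMod m) : PathAlg K m :=
  RingQuot.mkAlgHom K (PathRel K m) (Aa K m i)
def pb (K : Type) [Field K] (m : ℕ) [NeZero m] (i : ZMod m) : PathAlg K m :=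
  RingQuot.mkAlgHom K (PathRel K m) (Bb K m i)

/-- The relations defining `Λ_q`: `a_i a_{i+1} = 0`, `ā_{i-1} ā_{i-2} = 0` and
`q_i a_i ā_i - ā_{i-1} a_{i-1} = 0`. -/
inductive LamRel (K : Type) [Field K] (m : ℕ) [NeZero m] (q : ZMod m → K) :
    PathAlg K m → PathAlg K m → Prop
  | row : ∀ i : ZMod m, LamRel K m q (pa K m i * pa K m (i + 1)) 0
  | col : ∀ i : ZMod m, LamRel K m q (pb K m (i - 1) * pb K m (i - 2)) 0
  | comm : ∀ i : ZMod m,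
      LamRel K m q (q i • (pa K m i * pb K m i) - pb K m (i - 1) * pa K m (i - 1)) 0

/-- The algebra `Λ_q`. -/
abbrev Lam (K : Type) [Field K] (m : ℕ) [NeZero m] (q : ZMod m → K) : Type :=
  RingQuot (LamRel K m q)

def lamE (K : Type) [Field K] (m : ℕ) [NeZero m] (q : ZMod m → K) (i : ZMod m) :
    Lam K m q := RingQuot.mkAlgHom K (LamRel K m q) (pe K m i)
def lamA (K : Type) [Field K] (m : ℕ) [NeZero m] (q : ZMod m → K) (i : ZMod m) :
    Lam K m q := RingQuot.mkAlgHom K (LamRel K m q) (pa K m i)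
def lamB (K : Type) [Field K] (m : ℕ) [NeZero m] (q : ZMod m → K) (i : ZMod m) :
    Lam K m q := RingQuot.mkAlgHom K (LamRel K m q) (pb K m i)

/-- The socle of a ring `R` as a left module over itself: the sum of all its simple
(= atomic) left submodules. -/
def socAlg (R : Type) [Ring R] : Submodule R R := sSup {S : Submodule R R | IsAtom S}

/-- The quotient of a `K`-algebra `R` by (the two-sided ideal generated by) its left socle. -/
abbrev socQuot (K : Type) [Field K] (R : Type) [Ring R] [Algebra K R] : Type :=
  RingQuot (fun x y : R => x - y ∈ socAlg R)

/-- The relations defining the deformed algebra `Λ̃` associated with scalars `b₁, b₂, t`. -/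
inductive TildeRel (K : Type) [Field K] (m : ℕ) [NeZero m] (b1 b2 t : K) :
    PathAlg K m → PathAlg K m → Prop
  | row : ∀ i : ZMod m, TildeRel K m b1 b2 t (pa K m i * pa K m (i + 1)) 0
  | col : ∀ i : ZMod m, TildeRel K m b1 b2 t (pb K m (i - 1) * pb K m (i - 2)) 0
  | comm : ∀ j : ZMod m, j ≠ 0 →
      TildeRel K m b1 b2 t
        (pa K m j * pb K m j - pb K m (j - 1) * pa K m (j - 1)
          - (t * (-1 : K) ^ (j.val) * b2) • pe K m j) 0
  | comm0 : TildeRel K m b1 b2 t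
        ((1 - t * b1) • (pa K m 0 * pb K m 0) - pb K m (-1) * pa K m (-1)
          - (t * b2) • pe K m 0) 0

/-- The deformed algebra `Λ̃`. -/
abbrev Tilde (K : Type) [Field K] (m : ℕ) [NeZero m] (b1 b2 t : K) : Type :=
  RingQuot (TildeRel K m b1 b2 t)

def tE (K : Type) [Field K] (m : ℕ) [NeZero m] (b1 b2 t : K) (i : ZMod m) :
    Tilde K m b1 b2 t := RingQuot.mkAlgHom K (TildeRel K m b1 b2 t) (pe K m i)
def tA (K : Type) [Field K] (m : ℕ) [NeZero m] (b1 b2 t : K) (i : ZMod m) :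
    Tilde K m b1 b2 t := RingQuot.mkAlgHom K (TildeRel K m b1 b2 t) (pa K m i)
def tB (K : Type) [Field K] (m : ℕ) [NeZero m] (b1 b2 t : K) (i : ZMod m) :
    Tilde K m b1 b2 t := RingQuot.mkAlgHom K (TildeRel K m b1 b2 t) (pb K m i)


/-- Concrete model algebra with basis `e_i, a_i, b_i, z_i`. -/
@[ext]
structure Zg (K : Type) [Field K] (m : ℕ) (q : ZMod m → K) where
  e : ZMod m → K
  a : ZMod m → K
  b : ZMod m → K
  z : ZMod m → K

namespace Zg

variable {K : Type} [Field K] {m : ℕ} [NeZero m] {q : ZMod m → K}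

instance : Zero (Zg K m q) := ⟨⟨0, 0, 0, 0⟩⟩
instance : Add (Zg K m q) := ⟨fun x y => ⟨x.e + y.e, x.a + y.a, x.b + y.b, x.z + y.z⟩⟩
instance : Neg (Zg K m q) := ⟨fun x => ⟨-x.e, -x.a, -x.b, -x.z⟩⟩
instance : SMul K (Zg K m q) := ⟨fun c x => ⟨c • x.e, c • x.a, c • x.b, c • x.z⟩⟩

@[simp] lemma zero_e (i : ZMod m) : (0 : Zg K m q).e i = 0 := rfl
@[simp] lemma zero_a (i : ZMod m) : (0 : Zg K m q).a i = 0 := rfl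
@[simp] lemma zero_b (i : ZMod m) : (0 : Zg K m q).b i = 0 := rfl
@[simp] lemma zero_z (i : ZMod m) : (0 : Zg K m q).z i = 0 := rfl
@[simp] lemma add_e (x y : Zg K m q) (i : ZMod m) : (x + y).e i = x.e i + y.e i := rfl
@[simp] lemma add_a (x y : Zg K m q) (i : ZMod m) : (x + y).a i = x.a i + y.a i := rfl
@[simp] lemma add_b (x y : Zg K m q) (i : ZMod m) : (x + y).b i = x.b i + y.b i := rfl
@[simp] lemma add_z (x y : Zg K m q) (i : ZMod m) : (x + y).z i = x.z i + y.z i := rfl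
@[simp] lemma neg_e (x : Zg K m q) (i : ZMod m) : (-x).e i = -x.e i := rfl
@[simp] lemma neg_a (x : Zg K m q) (i : ZMod m) : (-x).a i = -x.a i := rfl
@[simp] lemma neg_b (x : Zg K m q) (i : ZMod m) : (-x).b i = -x.b i := rfl
@[simp] lemma neg_z (x : Zg K m q) (i : ZMod m) : (-x).z i = -x.z i := rfl
@[simp] lemma smul_e (c : K) (x : Zg K m q) (i : ZMod m) : (c • x).e i = c * x.e i := rfl
@[simp] lemma smul_a (c : K) (x : Zg K m q) (i : ZMod m) : (c • x).a i = c * x.a i := rfl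
@[simp] lemma smul_b (c : K) (x : Zg K m q) (i : ZMod m) : (c • x).b i = c * x.b i := rfl
@[simp] lemma smul_z (c : K) (x : Zg K m q) (i : ZMod m) : (c • x).z i = c * x.z i := rfl

lemma ext_pt {x y : Zg K m q} (he : ∀ i, x.e i = y.e i) (ha : ∀ i, x.a i = y.a i)
    (hb : ∀ i, x.b i = y.b i) (hz : ∀ i, x.z i = y.z i) : x = y := by
  ext i
  exacts [he i, ha i, hb i, hz i]

instance : AddCommGroup (Zg K m q) where
  add_assoc x y z := ext_pt (fun i => add_assoc ..) (fun i => add_assoc ..)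
    (fun i => add_assoc ..) (fun i => add_assoc ..)
  zero_add x := ext_pt (fun i => zero_add _) (fun i => zero_add _)
    (fun i => zero_add _) (fun i => zero_add _)
  add_zero x := ext_pt (fun i => add_zero _) (fun i => add_zero _)
    (fun i => add_zero _) (fun i => add_zero _)
  add_comm x y := ext_pt (fun i => add_comm ..) (fun i => add_comm ..)
    (fun i => add_comm ..) (fun i => add_comm ..)
  neg_add_cancel x := ext_pt (fun i => neg_add_cancel _) (fun i => neg_add_cancel _)
    (fun i => neg_add_cancel _) (fun i => neg_add_cancel _)
  nsmul := nsmulRec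
  zsmul := zsmulRec

instance : Module K (Zg K m q) where
  one_smul x := ext_pt (fun i => one_mul _) (fun i => one_mul _)
    (fun i => one_mul _) (fun i => one_mul _)
  mul_smul c d x := ext_pt (fun i => mul_assoc ..) (fun i => mul_assoc ..)
    (fun i => mul_assoc ..) (fun i => mul_assoc ..)
  smul_zero c := ext_pt (fun i => mul_zero _) (fun i => mul_zero _)
    (fun i => mul_zero _) (fun i => mul_zero _)
  smul_add c x y := ext_pt (fun i => mul_add ..) (fun i => mul_add ..)
    (fun i => mul_add ..) (fun i => mul_add ..)
  add_smul c d x := ext_pt (fun i => add_mul ..) (fun i => add_mul ..)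
    (fun i => add_mul ..) (fun i => add_mul ..)
  zero_smul x := ext_pt (fun i => zero_mul _) (fun i => zero_mul _)
    (fun i => zero_mul _) (fun i => zero_mul _)

instance : One (Zg K m q) := ⟨⟨fun _ => 1, 0, 0, 0⟩⟩
instance : Mul (Zg K m q) :=
  ⟨fun x y =>
    ⟨fun i => x.e i * y.e i,
     fun i => x.e i * y.a i + x.a i * y.e (i + 1),
     fun i => x.e (i + 1) * y.b i + x.b i * y.e i,
     fun i => x.e i * y.z i + x.z i * y.e i + x.a i * y.b i +
       q i * (x.b (i - 1) * y.a (i - 1))⟩⟩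

@[simp] lemma one_e (i : ZMod m) : (1 : Zg K m q).e i = 1 := rfl
@[simp] lemma one_a (i : ZMod m) : (1 : Zg K m q).a i = 0 := rfl
@[simp] lemma one_b (i : ZMod m) : (1 : Zg K m q).b i = 0 := rfl
@[simp] lemma one_z (i : ZMod m) : (1 : Zg K m q).z i = 0 := rfl
@[simp] lemma mul_e' (x y : Zg K m q) (i : ZMod m) : (x * y).e i = x.e i * y.e i := rfl
@[simp] lemma mul_a' (x y : Zg K m q) (i : ZMod m) :
    (x * y).a i = x.e i * y.a i + x.a i * y.e (i + 1) := rfl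
@[simp] lemma mul_b' (x y : Zg K m q) (i : ZMod m) :
    (x * y).b i = x.e (i + 1) * y.b i + x.b i * y.e i := rfl
@[simp] lemma mul_z' (x y : Zg K m q) (i : ZMod m) :
    (x * y).z i = x.e i * y.z i + x.z i * y.e i + x.a i * y.b i +
      q i * (x.b (i - 1) * y.a (i - 1)) := rfl

instance : Ring (Zg K m q) :=
  { (inferInstance : AddCommGroup (Zg K m q)) with
    mul := (· * ·)
    one := 1
    left_distrib := fun x y z => ext_pt (fun i => by simp; ring) (fun i => by simp; ring)
      (fun i => by simp; ring) (fun i => by simp; ring)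
    right_distrib := fun x y z => ext_pt (fun i => by simp; ring) (fun i => by simp; ring)
      (fun i => by simp; ring) (fun i => by simp; ring)
    zero_mul := fun x => ext_pt (fun i => by simp) (fun i => by simp)
      (fun i => by simp) (fun i => by simp)
    mul_zero := fun x => ext_pt (fun i => by simp) (fun i => by simp)
      (fun i => by simp) (fun i => by simp)
    mul_assoc := fun x y z => ext_pt (fun i => by simp; ring) (fun i => by simp; ring)
      (fun i => by simp; ring) (fun i => by simp [sub_add_cancel]; ring)
    one_mul := fun x => ext_pt (fun i => by simp) (fun i => by simp)
      (fun i => by simp) (fun i => by simp)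
    mul_one := fun x => ext_pt (fun i => by simp) (fun i => by simp)
      (fun i => by simp) (fun i => by simp) }

instance : Algebra K (Zg K m q) := Algebra.ofModule
  (fun c x y => ext_pt (fun i => by simp; ring) (fun i => by simp; ring)
      (fun i => by simp; ring) (fun i => by simp; ring))
  (fun c x y => ext_pt (fun i => by simp; ring) (fun i => by simp; ring)
      (fun i => by simp; ring) (fun i => by simp; ring))

@[simp] lemma algebraMap_e (c : K) (i : ZMod m) :
    (algebraMap K (Zg K m q) c).e i = c := by
  show ((c • (1 : Zg K m q))).e i = c
  simp

end Zg
namespace Zg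

variable (K : Type) [Field K] (m : ℕ) [NeZero m] (q : ZMod m → K)

/-- Evaluation of the `e`-component as an additive map. -/
def eHom (k : ZMod m) : Zg K m q →+ K :=
  { toFun := fun x => x.e k, map_zero' := rfl, map_add' := fun _ _ => rfl }
def aHom (k : ZMod m) : Zg K m q →+ K :=
  { toFun := fun x => x.a k, map_zero' := rfl, map_add' := fun _ _ => rfl }
def bHom (k : ZMod m) : Zg K m q →+ K :=
  { toFun := fun x => x.b k, map_zero' := rfl, map_add' := fun _ _ => rfl }
def zHom (k : ZMod m) : Zg K m q →+ K :=
  { toFun := fun x => x.z k, map_zero' := rfl, map_add' := fun _ _ => rfl }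

variable {K m q}

@[simp] lemma sum_e {ι : Type} (s : Finset ι) (f : ι → Zg K m q) (k : ZMod m) :
    (∑ i ∈ s, f i).e k = ∑ i ∈ s, (f i).e k := map_sum (eHom K m q k) f s
@[simp] lemma sum_a {ι : Type} (s : Finset ι) (f : ι → Zg K m q) (k : ZMod m) :
    (∑ i ∈ s, f i).a k = ∑ i ∈ s, (f i).a k := map_sum (aHom K m q k) f s
@[simp] lemma sum_b {ι : Type} (s : Finset ι) (f : ι → Zg K m q) (k : ZMod m) :
    (∑ i ∈ s, f i).b k = ∑ i ∈ s, (f i).b k := map_sum (bHom K m q k) f s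
@[simp] lemma sum_z {ι : Type} (s : Finset ι) (f : ι → Zg K m q) (k : ZMod m) :
    (∑ i ∈ s, f i).z k = ∑ i ∈ s, (f i).z k := map_sum (zHom K m q k) f s

variable (K m q)

/-- basis elements -/
def zE (i : ZMod m) : Zg K m q := ⟨Pi.single i 1, 0, 0, 0⟩
def zA (i : ZMod m) : Zg K m q := ⟨0, Pi.single i 1, 0, 0⟩
def zB (i : ZMod m) : Zg K m q := ⟨0, 0, Pi.single i 1, 0⟩
def zZ (i : ZMod m) : Zg K m q := ⟨0, 0, 0, Pi.single i 1⟩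

variable {K m q}

@[simp] lemma zE_e (i j : ZMod m) : (zE K m q i).e j = if j = i then 1 else 0 := by
  simp [zE, Pi.single_apply]
@[simp] lemma zE_a (i j : ZMod m) : (zE K m q i).a j = 0 := rfl
@[simp] lemma zE_b (i j : ZMod m) : (zE K m q i).b j = 0 := rfl
@[simp] lemma zE_z (i j : ZMod m) : (zE K m q i).z j = 0 := rfl
@[simp] lemma zA_e (i j : ZMod m) : (zA K m q i).e j = 0 := rfl
@[simp] lemma zA_a (i j : ZMod m) : (zA K m q i).a j = if j = i then 1 else 0 := by
  simp [zA, Pi.single_apply]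
@[simp] lemma zA_b (i j : ZMod m) : (zA K m q i).b j = 0 := rfl
@[simp] lemma zA_z (i j : ZMod m) : (zA K m q i).z j = 0 := rfl
@[simp] lemma zB_e (i j : ZMod m) : (zB K m q i).e j = 0 := rfl
@[simp] lemma zB_a (i j : ZMod m) : (zB K m q i).a j = 0 := rfl
@[simp] lemma zB_b (i j : ZMod m) : (zB K m q i).b j = if j = i then 1 else 0 := by
  simp [zB, Pi.single_apply]
@[simp] lemma zB_z (i j : ZMod m) : (zB K m q i).z j = 0 := rfl
@[simp] lemma zZ_e (i j : ZMod m) : (zZ K m q i).e j = 0 := rfl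
@[simp] lemma zZ_a (i j : ZMod m) : (zZ K m q i).a j = 0 := rfl
@[simp] lemma zZ_b (i j : ZMod m) : (zZ K m q i).b j = 0 := rfl
@[simp] lemma zZ_z (i j : ZMod m) : (zZ K m q i).z j = if j = i then 1 else 0 := by
  simp [zZ, Pi.single_apply]

@[simp] lemma ite_e (p : Prop) [Decidable p] (x y : Zg K m q) (k : ZMod m) :
    (if p then x else y).e k = if p then x.e k else y.e k := apply_ite (fun w : Zg K m q => w.e k) p x y
@[simp] lemma ite_a (p : Prop) [Decidable p] (x y : Zg K m q) (k : ZMod m) :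
    (if p then x else y).a k = if p then x.a k else y.a k := apply_ite (fun w : Zg K m q => w.a k) p x y
@[simp] lemma ite_b (p : Prop) [Decidable p] (x y : Zg K m q) (k : ZMod m) :
    (if p then x else y).b k = if p then x.b k else y.b k := apply_ite (fun w : Zg K m q => w.b k) p x y
@[simp] lemma ite_z (p : Prop) [Decidable p] (x y : Zg K m q) (k : ZMod m) :
    (if p then x else y).z k = if p then x.z k else y.z k := apply_ite (fun w : Zg K m q => w.z k) p x y

lemma zE_mul_zE (i j : ZMod m) :
    zE K m q i * zE K m q j = if i = j then zE K m q i else 0 := by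
  apply ext_pt <;> intro k <;> simp <;> split_ifs <;> simp_all
lemma sum_zE : (∑ i : ZMod m, zE K m q i) = 1 := by
  apply ext_pt <;> intro k <;> simp
lemma zE_mul_zA (i j : ZMod m) :
    zE K m q i * zA K m q j = if i = j then zA K m q j else 0 := by
  apply ext_pt <;> intro k <;> simp <;> split_ifs <;> simp_all
lemma zA_mul_zE (i j : ZMod m) :
    zA K m q i * zE K m q j = if j = i + 1 then zA K m q i else 0 := by
  apply ext_pt <;> intro k <;> simp <;> split_ifs <;> simp_all
lemma zE_mul_zB (i j : ZMod m) :
    zE K m q i * zB K m q j = if i = j + 1 then zB K m q j else 0 := by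
  apply ext_pt <;> intro k <;> simp <;> split_ifs <;> simp_all
lemma zB_mul_zE (i j : ZMod m) :
    zB K m q i * zE K m q j = if j = i then zB K m q i else 0 := by
  apply ext_pt <;> intro k <;> simp <;> split_ifs <;> simp_all
lemma zA_mul_zA (i j : ZMod m) : zA K m q i * zA K m q j = 0 := by
  apply ext_pt <;> intro k <;> simp
lemma zB_mul_zB (i j : ZMod m) : zB K m q i * zB K m q j = 0 := by
  apply ext_pt <;> intro k <;> simp
lemma zA_mul_zB (i j : ZMod m) :
    zA K m q i * zB K m q j = if i = j then zZ K m q i else 0 := by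
  apply ext_pt <;> intro k <;> simp <;> split_ifs <;> simp_all
lemma zB_mul_zA (i j : ZMod m) :
    zB K m q i * zA K m q j = if i = j then q (i + 1) • zZ K m q (i + 1) else 0 := by
  apply ext_pt <;> intro k <;> simp [sub_eq_iff_eq_add] <;> split_ifs <;> simp_all

/-- Decomposition of an arbitrary element in the basis. -/
lemma decomp (x : Zg K m q) :
    x = (∑ i, x.e i • zE K m q i) + (∑ i, x.a i • zA K m q i) +
        (∑ i, x.b i • zB K m q i) + (∑ i, x.z i • zZ K m q i) := by
  apply ext_pt <;> intro k <;>
    simp [mul_ite, Finset.sum_ite_eq, Finset.sum_ite_eq']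

end Zg
def socAlg' (R : Type) [Ring R] : Submodule R R := sSup {S : Submodule R R | IsAtom S}

namespace Zg

variable {K : Type} [Field K] {m : ℕ} [NeZero m] {q : ZMod m → K}

@[simp] lemma algebraMap_a (c : K) (i : ZMod m) : (algebraMap K (Zg K m q) c).a i = 0 := by
  show ((c • (1 : Zg K m q))).a i = 0; simp
@[simp] lemma algebraMap_b (c : K) (i : ZMod m) : (algebraMap K (Zg K m q) c).b i = 0 := by
  show ((c • (1 : Zg K m q))).b i = 0; simp
@[simp] lemma algebraMap_z (c : K) (i : ZMod m) : (algebraMap K (Zg K m q) c).z i = 0 := by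
  show ((c • (1 : Zg K m q))).z i = 0; simp

lemma zZ_ne_zero (i : ZMod m) : zZ K m q i ≠ 0 := by
  intro h
  have := congrArg (fun w : Zg K m q => w.z i) h
  simp at this

lemma mul_zZ (d : Zg K m q) (i : ZMod m) : d * zZ K m q i = d.e i • zZ K m q i := by
  apply ext_pt <;> intro k <;> simp <;> split_ifs <;> simp_all

lemma zZ_mul (x : Zg K m q) (k : ZMod m) : zZ K m q k * x = x.e k • zZ K m q k := by
  apply ext_pt <;> intro j <;> simp <;> split_ifs <;> simp_all [mul_comm]

lemma zB_mul (x : Zg K m q) (k : ZMod m) (he : ∀ j, x.e j = 0) :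
    zB K m q k * x = (q (k + 1) * x.a k) • zZ K m q (k + 1) := by
  apply ext_pt <;> intro j <;> simp [he, sub_eq_iff_eq_add] <;> split_ifs <;>
    simp_all [mul_comm, mul_left_comm]

lemma zA_mul (x : Zg K m q) (k : ZMod m) (he : ∀ j, x.e j = 0) :
    zA K m q k * x = x.b k • zZ K m q k := by
  apply ext_pt <;> intro j <;> simp [he] <;> split_ifs <;> simp_all [mul_comm]

/-- The span of the `z`-part: the socle of `Zg`. -/
def Wsub (K : Type) [Field K] (m : ℕ) [NeZero m] (q : ZMod m → K) :
    Submodule (Zg K m q) (Zg K m q) where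
  carrier := {x | (∀ k, x.e k = 0) ∧ (∀ k, x.a k = 0) ∧ (∀ k, x.b k = 0)}
  add_mem' := by
    rintro x y ⟨he, ha, hb⟩ ⟨he', ha', hb'⟩
    exact ⟨fun k => by simp [he, he'], fun k => by simp [ha, ha'], fun k => by simp [hb, hb']⟩
  zero_mem' := ⟨fun k => rfl, fun k => rfl, fun k => rfl⟩
  smul_mem' := by
    rintro d x ⟨he, ha, hb⟩
    rw [smul_eq_mul]
    exact ⟨fun k => by simp [he], fun k => by simp [he, ha], fun k => by simp [he, hb]⟩

lemma mem_Wsub {x : Zg K m q} :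
    x ∈ Wsub K m q ↔ (∀ k, x.e k = 0) ∧ (∀ k, x.a k = 0) ∧ (∀ k, x.b k = 0) := Iff.rfl

lemma zZ_mem_Wsub (i : ZMod m) : zZ K m q i ∈ Wsub K m q :=
  ⟨fun k => rfl, fun k => rfl, fun k => rfl⟩

lemma eq_sum_z {x : Zg K m q} (hx : x ∈ Wsub K m q) :
    x = ∑ i, x.z i • zZ K m q i := by
  obtain ⟨he, ha, hb⟩ := hx
  conv_lhs => rw [decomp x]
  simp [he, ha, hb]

lemma isAtom_span_zZ (i : ZMod m) :
    IsAtom (Submodule.span (Zg K m q) {zZ K m q i}) := by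
  constructor
  · rw [Ne, Submodule.span_singleton_eq_bot]
    exact zZ_ne_zero i
  · intro b hb
    by_contra hb0
    obtain ⟨v, hvb, hv0⟩ := Submodule.exists_mem_ne_zero_of_ne_bot hb0
    have hv : v ∈ Submodule.span (Zg K m q) {zZ K m q i} := hb.le hvb
    rw [Submodule.mem_span_singleton] at hv
    obtain ⟨d, rfl⟩ := hv
    rw [smul_eq_mul, mul_zZ] at hvb hv0
    have hc : d.e i ≠ 0 := fun h => hv0 (by simp [h])
    have : zZ K m q i = algebraMap K (Zg K m q) (d.e i)⁻¹ * (d.e i • zZ K m q i) := by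
      apply ext_pt <;> intro k <;> simp <;> split_ifs <;>
        simp_all [mul_comm, inv_mul_cancel₀ hc]
    have hz : zZ K m q i ∈ b := by
      rw [this, ← smul_eq_mul]
      exact b.smul_mem _ hvb
    exact absurd (hb.trans_le (Submodule.span_le.2 (by simpa using hz))) (lt_irrefl _)

lemma socAlg_Zg (hq : ∀ i, q i ≠ 0) : socAlg' (Zg K m q) = Wsub K m q := by
  apply le_antisymm
  · apply sSup_le
    intro S hS
    by_contra hle
    obtain ⟨x, hxS, hxW⟩ := SetLike.not_le_iff_exists.1 hle
    -- produce a nonzero element of S ⊓ Wsub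
    have key : ∃ v : Zg K m q, v ∈ S ∧ v ∈ Wsub K m q ∧ v ≠ 0 := by
      by_cases he : ∀ k, x.e k = 0
      · by_cases ha : ∀ k, x.a k = 0
        · by_cases hb : ∀ k, x.b k = 0
          · exact absurd ⟨he, ha, hb⟩ hxW
          · push_neg at hb
            obtain ⟨k, hk⟩ := hb
            refine ⟨zA K m q k * x, ?_, ?_, ?_⟩
            · rw [← smul_eq_mul]; exact S.smul_mem _ hxS
            · rw [zA_mul x k he]
              exact Submodule.smul_of_tower_mem _ _ (zZ_mem_Wsub k)
            · rw [zA_mul x k he]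
              exact smul_ne_zero hk (zZ_ne_zero k)
        · push_neg at ha
          obtain ⟨k, hk⟩ := ha
          refine ⟨zB K m q k * x, ?_, ?_, ?_⟩
          · rw [← smul_eq_mul]; exact S.smul_mem _ hxS
          · rw [zB_mul x k he]
            exact Submodule.smul_of_tower_mem _ _ (zZ_mem_Wsub _)
          · rw [zB_mul x k he]
            exact smul_ne_zero (mul_ne_zero (hq _) hk) (zZ_ne_zero _)
      · push_neg at he
        obtain ⟨k, hk⟩ := he
        refine ⟨zZ K m q k * x, ?_, ?_, ?_⟩
        · rw [← smul_eq_mul]; exact S.smul_mem _ hxS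
        · rw [zZ_mul x k]
          exact Submodule.smul_of_tower_mem _ _ (zZ_mem_Wsub _)
        · rw [zZ_mul x k]
          exact smul_ne_zero hk (zZ_ne_zero k)
    obtain ⟨v, hvS, hvW, hv0⟩ := key
    have hlt : S ⊓ Wsub K m q < S := by
      refine lt_of_le_of_ne inf_le_left fun hEq => hle ?_
      rw [← hEq]; exact inf_le_right
    have := hS.2 _ hlt
    rw [Submodule.eq_bot_iff] at this
    exact hv0 (this v ⟨hvS, hvW⟩)
  · intro x hx
    rw [eq_sum_z hx]
    apply sum_mem
    intro i _
    apply Submodule.smul_of_tower_mem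
    exact le_sSup (show _ ∈ {S : Submodule (Zg K m q) (Zg K m q) | IsAtom S} from isAtom_span_zZ i)
      (Submodule.mem_span_singleton_self _)

lemma restrictScalars_Wsub :
    (Wsub K m q).restrictScalars K = Submodule.span K (Set.range (zZ K m q)) := by
  apply le_antisymm
  · intro x hx
    rw [eq_sum_z hx]
    exact sum_mem fun i _ => Submodule.smul_mem _ _ (Submodule.subset_span ⟨i, rfl⟩)
  · rw [Submodule.span_le]
    rintro _ ⟨i, rfl⟩
    exact zZ_mem_Wsub i

end Zg
section Model

variable {K : Type} [Field K] {m : ℕ} [NeZero m]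
variable {R : Type} [Ring R] [Algebra K R]

/-- Data of a representation of the defining relations of `Λ_q` plus the path algebra
relations, inside an algebra `R`. -/
structure IsModel (q : ZMod m → K) (E A B : ZMod m → R) : Prop where
  orth : ∀ i j, i ≠ j → E i * E j = 0
  idem : ∀ i, E i * E i = E i
  total : ∑ i, E i = 1
  ea : ∀ i, E i * A i = A i
  ae : ∀ i, A i * E (i + 1) = A i
  eb : ∀ i, E (i + 1) * B i = B i
  be : ∀ i, B i * E i = B i
  row : ∀ i, A i * A (i + 1) = 0
  col : ∀ i, B (i + 1) * B i = 0
  comm : ∀ i, B i * A i = q (i + 1) • (A (i + 1) * B (i + 1))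

/-- The span of the 4m canonical elements. -/
def Tset (E A B : ZMod m → R) : Set R :=
  Set.range E ∪ Set.range A ∪ Set.range B ∪ Set.range (fun i => A i * B i)

namespace IsModel

variable {q : ZMod m → K} {E A B : ZMod m → R} (h : IsModel q E A B)
include h

lemma eE (i j : ZMod m) : E i * E j = if i = j then E i else 0 := by
  split_ifs with hij
  · subst hij; exact h.idem i
  · exact h.orth i j hij

lemma eA (j i : ZMod m) : E j * A i = if j = i then A i else 0 := by
  by_cases hji : j = i
  · subst hji; simp [h.ea]
  · have e1 : E j * A i = (E j * E i) * A i := by rw [mul_assoc, h.ea]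
    rw [e1, h.orth j i hji, zero_mul, if_neg hji]

lemma aE (i j : ZMod m) : A i * E j = if j = i + 1 then A i else 0 := by
  by_cases hj : j = i + 1
  · subst hj; simp [h.ae]
  · have e1 : A i * E j = A i * (E (i+1) * E j) := by rw [← mul_assoc, h.ae]
    rw [e1, h.orth _ _ (fun hh => hj hh.symm), mul_zero, if_neg hj]

lemma eB (j i : ZMod m) : E j * B i = if j = i + 1 then B i else 0 := by
  by_cases hj : j = i + 1
  · subst hj; simp [h.eb]
  · have e1 : E j * B i = (E j * E (i+1)) * B i := by rw [mul_assoc, h.eb]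
    rw [e1, h.orth _ _ hj, zero_mul, if_neg hj]

lemma bE (i j : ZMod m) : B i * E j = if j = i then B i else 0 := by
  by_cases hj : j = i
  · subst hj; simp [h.be]
  · have e1 : B i * E j = B i * (E i * E j) := by rw [← mul_assoc, h.be]
    rw [e1, h.orth _ _ (fun hh => hj hh.symm), mul_zero, if_neg hj]

lemma aA (i j : ZMod m) : A i * A j = 0 := by
  by_cases hj : j = i + 1
  · subst hj; exact h.row i
  · have e1 : A i * A j = (A i * E (i+1)) * (E j * A j) := by rw [h.ae, h.ea]
    rw [mul_assoc, ← mul_assoc (E (i+1)), h.orth _ _ (fun hh => hj hh.symm),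
      zero_mul, mul_zero] at e1
    exact e1

lemma bB (i j : ZMod m) : B i * B j = 0 := by
  by_cases hj : i = j + 1
  · subst hj; exact h.col j
  · have e1 : B i * B j = (B i * E i) * (E (j+1) * B j) := by rw [h.be, h.eb]
    rw [mul_assoc, ← mul_assoc (E i), h.orth _ _ hj, zero_mul, mul_zero] at e1
    exact e1

lemma aB (i j : ZMod m) : A i * B j = if i = j then A i * B i else 0 := by
  by_cases hj : i = j
  · subst hj; simp
  · have e1 : A i * B j = (A i * E (i+1)) * (E (j+1) * B j) := by rw [h.ae, h.eb]
    rw [mul_assoc, ← mul_assoc (E (i+1)),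
      h.orth _ _ (fun hh => hj (by exact add_right_cancel hh)), zero_mul, mul_zero] at e1
    rw [e1, if_neg hj]

lemma bA (i j : ZMod m) : B i * A j = if i = j then q (i+1) • (A (i+1) * B (i+1)) else 0 := by
  by_cases hj : i = j
  · subst hj; simp [h.comm]
  · have e1 : B i * A j = (B i * E i) * (E j * A j) := by rw [h.be, h.ea]
    rw [mul_assoc, ← mul_assoc (E i), h.orth _ _ hj, zero_mul, mul_zero] at e1
    rw [e1, if_neg hj]

lemma eZ (j i : ZMod m) : E j * (A i * B i) = if j = i then A i * B i else 0 := by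
  rw [← mul_assoc, h.eA]
  split_ifs <;> simp

lemma zE' (i j : ZMod m) : (A i * B i) * E j = if j = i then A i * B i else 0 := by
  rw [mul_assoc, h.bE]
  split_ifs <;> simp

lemma aZ (j i : ZMod m) : A j * (A i * B i) = 0 := by
  rw [← mul_assoc, h.aA, zero_mul]

lemma zA' (i j : ZMod m) : (A i * B i) * A j = 0 := by
  rw [mul_assoc, h.bA]
  split_ifs with h1
  · rw [mul_smul_comm, ← mul_assoc, h.aA, zero_mul, smul_zero]
  · simp

lemma zB' (i j : ZMod m) : (A i * B i) * B j = 0 := by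
  rw [mul_assoc, h.bB, mul_zero]

lemma bZ (j i : ZMod m) : B j * (A i * B i) = 0 := by
  rw [← mul_assoc, h.bA]
  split_ifs with h1
  · rw [smul_mul_assoc, mul_assoc, h.bB, mul_zero, smul_zero]
  · simp

lemma zZ' (i j : ZMod m) : (A i * B i) * (A j * B j) = 0 := by
  rw [← mul_assoc, h.zA', zero_mul]


lemma one_mem_span : (1 : R) ∈ Submodule.span K (Tset E A B) := by
  rw [← h.total]
  exact sum_mem fun i _ => Submodule.subset_span (Or.inl (Or.inl (Or.inl ⟨i, rfl⟩)))

lemma mul_mem_span {x y : R} (hx : x ∈ Submodule.span K (Tset E A B))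
    (hy : y ∈ Submodule.span K (Tset E A B)) : x * y ∈ Submodule.span K (Tset E A B) := by
  have hle : Submodule.span K (Tset E A B) * Submodule.span K (Tset E A B) ≤
      Submodule.span K (Tset E A B) := by
    rw [Submodule.span_mul_span, Submodule.span_le]
    rintro w hw
    obtain ⟨u, hu, v, hv, rfl⟩ := Set.mem_mul.1 hw
    have mem : ∀ s ∈ Tset E A B, s ∈ Submodule.span K (Tset E A B) :=
      fun s hs => Submodule.subset_span hs
    have memE : ∀ i, E i ∈ Submodule.span K (Tset E A B) :=
      fun i => Submodule.subset_span (Or.inl (Or.inl (Or.inl ⟨i, rfl⟩)))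
    have memA : ∀ i, A i ∈ Submodule.span K (Tset E A B) :=
      fun i => Submodule.subset_span (Or.inl (Or.inl (Or.inr ⟨i, rfl⟩)))
    have memB : ∀ i, B i ∈ Submodule.span K (Tset E A B) :=
      fun i => Submodule.subset_span (Or.inl (Or.inr ⟨i, rfl⟩))
    have memZ : ∀ i, A i * B i ∈ Submodule.span K (Tset E A B) :=
      fun i => Submodule.subset_span (Or.inr ⟨i, rfl⟩)
    rcases hu with (((⟨i, rfl⟩ | ⟨i, rfl⟩) | ⟨i, rfl⟩) | ⟨i, rfl⟩) <;>
      rcases hv with (((⟨j, rfl⟩ | ⟨j, rfl⟩) | ⟨j, rfl⟩) | ⟨j, rfl⟩)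
    · rw [h.eE]; split_ifs <;> simp [memE, Submodule.zero_mem]
    · rw [h.eA]; split_ifs <;> simp [memA, Submodule.zero_mem]
    · rw [h.eB]; split_ifs <;> simp [memB, Submodule.zero_mem]
    · rw [h.eZ]; split_ifs <;> simp [memZ, Submodule.zero_mem]
    · rw [h.aE]; split_ifs <;> simp [memA, Submodule.zero_mem]
    · rw [h.aA]; simp [Submodule.zero_mem]
    · rw [h.aB]; split_ifs <;> simp [memZ, Submodule.zero_mem]
    · rw [h.aZ]; simp [Submodule.zero_mem]
    · rw [h.bE]; split_ifs <;> simp [memB, Submodule.zero_mem]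
    · rw [h.bA]; split_ifs <;>
        simp [Submodule.smul_mem _ _ (memZ _), Submodule.zero_mem]
    · rw [h.bB]; simp [Submodule.zero_mem]
    · rw [h.bZ]; simp [Submodule.zero_mem]
    · rw [h.zE']; split_ifs <;> simp [memZ, Submodule.zero_mem]
    · rw [h.zA']; simp [Submodule.zero_mem]
    · rw [h.zB']; simp [Submodule.zero_mem]
    · rw [h.zZ']; simp [Submodule.zero_mem]
  exact hle (Submodule.mul_mem_mul hx hy)

end IsModel

end Model
section Bijective

variable {K : Type} [Field K] {m : ℕ} [NeZero m]
variable {R : Type} [Ring R] [Algebra K R] {q : ZMod m → K} {E A B : ZMod m → R}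

/-- The candidate linear inverse. -/
def psi (E A B : ZMod m → R) : Zg K m q →ₗ[K] R where
  toFun y := (∑ i, y.e i • E i) + (∑ i, y.a i • A i) + (∑ i, y.b i • B i) +
    (∑ i, y.z i • (A i * B i))
  map_add' x y := by
    simp only [Zg.add_e, Zg.add_a, Zg.add_b, Zg.add_z, add_smul, Finset.sum_add_distrib]
    abel
  map_smul' c x := by
    simp only [Zg.smul_e, Zg.smul_a, Zg.smul_b, Zg.smul_z, mul_smul, RingHom.id_apply,
      Finset.smul_sum, smul_add]

lemma phi_psi (φ : R →ₐ[K] Zg K m q)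
    (hE : ∀ i, φ (E i) = Zg.zE K m q i) (hA : ∀ i, φ (A i) = Zg.zA K m q i)
    (hB : ∀ i, φ (B i) = Zg.zB K m q i) (y : Zg K m q) : φ (psi E A B y) = y := by
  have : φ (psi E A B y) =
      (∑ i, y.e i • Zg.zE K m q i) + (∑ i, y.a i • Zg.zA K m q i) +
      (∑ i, y.b i • Zg.zB K m q i) + (∑ i, y.z i • Zg.zZ K m q i) := by
    simp only [psi, LinearMap.coe_mk, AddHom.coe_mk, map_add, map_sum, map_smul, map_mul,
      hE, hA, hB]
    congr 1
    apply Finset.sum_congr rfl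
    intro i _
    rw [Zg.zA_mul_zB, if_pos rfl]
  rw [this, ← Zg.decomp]

lemma psi_zE (i : ZMod m) : psi (q := q) E A B (Zg.zE K m q i) = E i := by
  simp [psi, ite_smul, Finset.sum_ite_eq']
lemma psi_zA (i : ZMod m) : psi (q := q) E A B (Zg.zA K m q i) = A i := by
  simp [psi, ite_smul, Finset.sum_ite_eq']
lemma psi_zB (i : ZMod m) : psi (q := q) E A B (Zg.zB K m q i) = B i := by
  simp [psi, ite_smul, Finset.sum_ite_eq']
lemma psi_zZ (i : ZMod m) : psi (q := q) E A B (Zg.zZ K m q i) = A i * B i := by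
  simp [psi, ite_smul, Finset.sum_ite_eq']

lemma model_bijective (φ : R →ₐ[K] Zg K m q)
    (hspan : Submodule.span K (Tset E A B) = ⊤)
    (hE : ∀ i, φ (E i) = Zg.zE K m q i) (hA : ∀ i, φ (A i) = Zg.zA K m q i)
    (hB : ∀ i, φ (B i) = Zg.zB K m q i) : Function.Bijective φ := by
  have hψ : ∀ x : R, ∃ y, psi (q := q) E A B y = x := by
    intro x
    have hx : x ∈ Submodule.span K (Tset E A B) := hspan ▸ Submodule.mem_top
    have hle : Submodule.span K (Tset E A B) ≤ LinearMap.range (psi (q := q) E A B) := by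
      rw [Submodule.span_le]
      rintro w ((((⟨i, rfl⟩ | ⟨i, rfl⟩) | ⟨i, rfl⟩) | ⟨i, rfl⟩))
      · exact ⟨Zg.zE K m q i, psi_zE i⟩
      · exact ⟨Zg.zA K m q i, psi_zA i⟩
      · exact ⟨Zg.zB K m q i, psi_zB i⟩
      · exact ⟨Zg.zZ K m q i, psi_zZ i⟩
    exact hle hx
  constructor
  · intro x1 x2 hx
    obtain ⟨y1, rfl⟩ := hψ x1
    obtain ⟨y2, rfl⟩ := hψ x2
    rw [phi_psi φ hE hA hB, phi_psi φ hE hA hB] at hx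
    rw [hx]
  · intro y
    exact ⟨psi E A B y, phi_psi φ hE hA hB y⟩

end Bijective

/-! ### Transfer of the socle along a ring isomorphism -/

section Transfer

variable {R S : Type} [Ring R] [Ring S]

/-- Transport a left submodule along a ring isomorphism. -/
def smap (f : R ≃+* S) (p : Submodule R R) : Submodule S S where
  carrier := {y | f.symm y ∈ p}
  add_mem' {a b} ha hb := by simp only [Set.mem_setOf_eq, map_add] at *; exact p.add_mem ha hb
  zero_mem' := by simp only [Set.mem_setOf_eq, map_zero]; exact p.zero_mem
  smul_mem' s y hy := by
    simp only [Set.mem_setOf_eq, smul_eq_mul, map_mul] at *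
    exact p.smul_mem _ hy

@[simp] lemma mem_smap {f : R ≃+* S} {p : Submodule R R} {y : S} :
    y ∈ smap f p ↔ f.symm y ∈ p := Iff.rfl

@[simp] lemma smap_smap_symm (f : R ≃+* S) (p : Submodule R R) :
    smap f.symm (smap f p) = p := by
  ext x
  simp only [mem_smap, RingEquiv.symm_symm, RingEquiv.symm_apply_apply]

@[simp] lemma smap_symm_smap (f : R ≃+* S) (p : Submodule S S) :
    smap f (smap f.symm p) = p := by
  ext x
  simp only [mem_smap, RingEquiv.symm_symm, RingEquiv.apply_symm_apply]

/-- The order isomorphism of submodule lattices induced by a ring isomorphism. -/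
def smapIso (f : R ≃+* S) : Submodule R R ≃o Submodule S S where
  toFun := smap f
  invFun := smap f.symm
  left_inv p := smap_smap_symm f p
  right_inv p := smap_symm_smap f p
  map_rel_iff' {p p'} := by
    constructor
    · intro hle x hx
      have h1 : f x ∈ smap f p := by
        rw [mem_smap, RingEquiv.symm_apply_apply]; exact hx
      have h2 : f x ∈ smap f p' := hle h1
      rwa [mem_smap, RingEquiv.symm_apply_apply] at h2
    · intro hle y hy
      exact hle hy

lemma socAlg_transfer (f : R ≃+* S) : smap f (socAlg' R) = socAlg' S := by
  have h1 : smap f (socAlg' R) = sSup (smap f '' {p : Submodule R R | IsAtom p}) := by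
    rw [socAlg', sSup_image]
    exact (smapIso f).map_sSup _
  rw [h1, socAlg']
  congr 1
  ext p
  simp only [Set.mem_image, Set.mem_setOf_eq]
  constructor
  · rintro ⟨p', hp', rfl⟩
    exact ((smapIso f).isAtom_iff p').2 hp'
  · intro hp
    exact ⟨smap f.symm p, ((smapIso f.symm).isAtom_iff p).2 hp, smap_symm_smap f p⟩

end Transfer
/-! ### The common quotient algebra `Cg` -/

/-- Concrete quotient algebra with basis `e_i, a_i, b_i` and all products of arrows zero. -/
@[ext]
structure Cg (K : Type) [Field K] (m : ℕ) where
  e : ZMod m → K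
  a : ZMod m → K
  b : ZMod m → K

namespace Cg

variable {K : Type} [Field K] {m : ℕ} [NeZero m]

instance : Zero (Cg K m) := ⟨⟨0, 0, 0⟩⟩
instance : Add (Cg K m) := ⟨fun x y => ⟨x.e + y.e, x.a + y.a, x.b + y.b⟩⟩
instance : Neg (Cg K m) := ⟨fun x => ⟨-x.e, -x.a, -x.b⟩⟩
instance : SMul K (Cg K m) := ⟨fun c x => ⟨c • x.e, c • x.a, c • x.b⟩⟩

@[simp] lemma zero_e (i : ZMod m) : (0 : Cg K m).e i = 0 := rfl
@[simp] lemma zero_a (i : ZMod m) : (0 : Cg K m).a i = 0 := rfl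
@[simp] lemma zero_b (i : ZMod m) : (0 : Cg K m).b i = 0 := rfl
@[simp] lemma add_e (x y : Cg K m) (i : ZMod m) : (x + y).e i = x.e i + y.e i := rfl
@[simp] lemma add_a (x y : Cg K m) (i : ZMod m) : (x + y).a i = x.a i + y.a i := rfl
@[simp] lemma add_b (x y : Cg K m) (i : ZMod m) : (x + y).b i = x.b i + y.b i := rfl
@[simp] lemma neg_e (x : Cg K m) (i : ZMod m) : (-x).e i = -x.e i := rfl
@[simp] lemma neg_a (x : Cg K m) (i : ZMod m) : (-x).a i = -x.a i := rfl
@[simp] lemma neg_b (x : Cg K m) (i : ZMod m) : (-x).b i = -x.b i := rfl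
@[simp] lemma smul_e (c : K) (x : Cg K m) (i : ZMod m) : (c • x).e i = c * x.e i := rfl
@[simp] lemma smul_a (c : K) (x : Cg K m) (i : ZMod m) : (c • x).a i = c * x.a i := rfl
@[simp] lemma smul_b (c : K) (x : Cg K m) (i : ZMod m) : (c • x).b i = c * x.b i := rfl

lemma ext_pt {x y : Cg K m} (he : ∀ i, x.e i = y.e i) (ha : ∀ i, x.a i = y.a i)
    (hb : ∀ i, x.b i = y.b i) : x = y := by
  ext i
  exacts [he i, ha i, hb i]

instance : AddCommGroup (Cg K m) where
  add_assoc x y z := ext_pt (fun i => add_assoc ..) (fun i => add_assoc ..) (fun i => add_assoc ..)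
  zero_add x := ext_pt (fun i => zero_add _) (fun i => zero_add _) (fun i => zero_add _)
  add_zero x := ext_pt (fun i => add_zero _) (fun i => add_zero _) (fun i => add_zero _)
  add_comm x y := ext_pt (fun i => add_comm ..) (fun i => add_comm ..) (fun i => add_comm ..)
  neg_add_cancel x := ext_pt (fun i => neg_add_cancel _) (fun i => neg_add_cancel _)
    (fun i => neg_add_cancel _)
  nsmul := nsmulRec
  zsmul := zsmulRec

instance : Module K (Cg K m) where
  one_smul x := ext_pt (fun i => one_mul _) (fun i => one_mul _) (fun i => one_mul _)
  mul_smul c d x := ext_pt (fun i => mul_assoc ..) (fun i => mul_assoc ..) (fun i => mul_assoc ..)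
  smul_zero c := ext_pt (fun i => mul_zero _) (fun i => mul_zero _) (fun i => mul_zero _)
  smul_add c x y := ext_pt (fun i => mul_add ..) (fun i => mul_add ..) (fun i => mul_add ..)
  add_smul c d x := ext_pt (fun i => add_mul ..) (fun i => add_mul ..) (fun i => add_mul ..)
  zero_smul x := ext_pt (fun i => zero_mul _) (fun i => zero_mul _) (fun i => zero_mul _)

instance : One (Cg K m) := ⟨⟨fun _ => 1, 0, 0⟩⟩
instance : Mul (Cg K m) :=
  ⟨fun x y =>
    ⟨fun i => x.e i * y.e i,
     fun i => x.e i * y.a i + x.a i * y.e (i + 1),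
     fun i => x.e (i + 1) * y.b i + x.b i * y.e i⟩⟩

@[simp] lemma one_e (i : ZMod m) : (1 : Cg K m).e i = 1 := rfl
@[simp] lemma one_a (i : ZMod m) : (1 : Cg K m).a i = 0 := rfl
@[simp] lemma one_b (i : ZMod m) : (1 : Cg K m).b i = 0 := rfl
@[simp] lemma mul_e' (x y : Cg K m) (i : ZMod m) : (x * y).e i = x.e i * y.e i := rfl
@[simp] lemma mul_a' (x y : Cg K m) (i : ZMod m) :
    (x * y).a i = x.e i * y.a i + x.a i * y.e (i + 1) := rfl
@[simp] lemma mul_b' (x y : Cg K m) (i : ZMod m) :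
    (x * y).b i = x.e (i + 1) * y.b i + x.b i * y.e i := rfl

instance : Ring (Cg K m) :=
  { (inferInstance : AddCommGroup (Cg K m)) with
    mul := (· * ·)
    one := 1
    left_distrib := fun x y z => ext_pt (fun i => by simp; ring) (fun i => by simp; ring)
      (fun i => by simp; ring)
    right_distrib := fun x y z => ext_pt (fun i => by simp; ring) (fun i => by simp; ring)
      (fun i => by simp; ring)
    zero_mul := fun x => ext_pt (fun i => by simp) (fun i => by simp) (fun i => by simp)
    mul_zero := fun x => ext_pt (fun i => by simp) (fun i => by simp) (fun i => by simp)
    mul_assoc := fun x y z => ext_pt (fun i => by simp; ring) (fun i => by simp; ring)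
      (fun i => by simp; ring)
    one_mul := fun x => ext_pt (fun i => by simp) (fun i => by simp) (fun i => by simp)
    mul_one := fun x => ext_pt (fun i => by simp) (fun i => by simp) (fun i => by simp) }

instance : Algebra K (Cg K m) := Algebra.ofModule
  (fun c x y => ext_pt (fun i => by simp; ring) (fun i => by simp; ring) (fun i => by simp; ring))
  (fun c x y => ext_pt (fun i => by simp; ring) (fun i => by simp; ring) (fun i => by simp; ring))

end Cg

/-- The projection from `Zg` to `Cg`, an algebra homomorphism with kernel the `z`-part. -/
def zgProj (K : Type) [Field K] (m : ℕ) [NeZero m] (q : ZMod m → K) :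
    Zg K m q →ₐ[K] Cg K m where
  toFun x := ⟨x.e, x.a, x.b⟩
  map_one' := rfl
  map_mul' x y := rfl
  map_zero' := rfl
  map_add' x y := rfl
  commutes' c := by
    apply Cg.ext_pt <;> intro i
    · show (algebraMap K (Zg K m q) c).e i = (algebraMap K (Cg K m) c).e i
      rw [Zg.algebraMap_e]
      show _ = (c • (1 : Cg K m)).e i
      simp
    · show (algebraMap K (Zg K m q) c).a i = (algebraMap K (Cg K m) c).a i
      rw [Zg.algebraMap_a]
      show _ = (c • (1 : Cg K m)).a i
      simp
    · show (algebraMap K (Zg K m q) c).b i = (algebraMap K (Cg K m) c).b i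
      rw [Zg.algebraMap_b]
      show _ = (c • (1 : Cg K m)).b i
      simp

lemma zgProj_surjective (K : Type) [Field K] (m : ℕ) [NeZero m] (q : ZMod m → K) :
    Function.Surjective (zgProj K m q) :=
  fun y => ⟨⟨y.e, y.a, y.b, 0⟩, rfl⟩

lemma zgProj_eq_zero_iff {K : Type} [Field K] {m : ℕ} [NeZero m] {q : ZMod m → K}
    (x : Zg K m q) : zgProj K m q x = 0 ↔ x ∈ Zg.Wsub K m q := by
  constructor
  · intro hx
    have he := fun k => congrArg (fun w : Cg K m => w.e k) hx
    have ha := fun k => congrArg (fun w : Cg K m => w.a k) hx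
    have hb := fun k => congrArg (fun w : Cg K m => w.b k) hx
    simp only [Cg.zero_e, Cg.zero_a, Cg.zero_b] at he ha hb
    exact ⟨he, ha, hb⟩
  · rintro ⟨he, ha, hb⟩
    apply Cg.ext_pt <;> intro i <;> simp [zgProj, he, ha, hb]
/-! ### Relations in the path algebra -/

section PathLemmas

variable {K : Type} [Field K] {m : ℕ} [NeZero m]

lemma pe_mul_pe (i j : ZMod m) :
    pe K m i * pe K m j = if i = j then pe K m i else 0 := by
  simp only [pe, ← map_mul]
  split_ifs with hij
  · subst hij; exact RingQuot.mkAlgHom_rel K (PathRel.idem i)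
  · rw [RingQuot.mkAlgHom_rel K (PathRel.orth i j hij), map_zero]

lemma sum_pe : (∑ i, pe K m i) = 1 := by
  simp only [pe, ← map_sum]
  rw [RingQuot.mkAlgHom_rel K PathRel.total, map_one]

lemma pe_mul_pa (i : ZMod m) : pe K m i * pa K m i = pa K m i := by
  simp only [pe, pa, ← map_mul]
  exact RingQuot.mkAlgHom_rel K (PathRel.asrc i)

lemma pa_mul_pe (i : ZMod m) : pa K m i * pe K m (i + 1) = pa K m i := by
  simp only [pe, pa, ← map_mul]
  exact RingQuot.mkAlgHom_rel K (PathRel.atgt i)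

lemma pe_mul_pb (i : ZMod m) : pe K m (i + 1) * pb K m i = pb K m i := by
  simp only [pe, pb, ← map_mul]
  exact RingQuot.mkAlgHom_rel K (PathRel.bsrc i)

lemma pb_mul_pe (i : ZMod m) : pb K m i * pe K m i = pb K m i := by
  simp only [pe, pb, ← map_mul]
  exact RingQuot.mkAlgHom_rel K (PathRel.btgt i)

/-! ### Generic lemmas about quotients of the path algebra -/

variable (rel : PathAlg K m → PathAlg K m → Prop)

lemma quot_isModel (q : ZMod m → K)
    (hrow : ∀ i, RingQuot.mkAlgHom K rel (pa K m i) * RingQuot.mkAlgHom K rel (pa K m (i + 1)) = 0)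
    (hcol : ∀ i, RingQuot.mkAlgHom K rel (pb K m (i + 1)) * RingQuot.mkAlgHom K rel (pb K m i) = 0)
    (hcomm : ∀ i, RingQuot.mkAlgHom K rel (pb K m i) * RingQuot.mkAlgHom K rel (pa K m i) =
      q (i + 1) • (RingQuot.mkAlgHom K rel (pa K m (i + 1)) *
        RingQuot.mkAlgHom K rel (pb K m (i + 1)))) :
    IsModel q (fun i => RingQuot.mkAlgHom K rel (pe K m i))
      (fun i => RingQuot.mkAlgHom K rel (pa K m i))
      (fun i => RingQuot.mkAlgHom K rel (pb K m i)) where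
  orth i j hij := by rw [← map_mul, pe_mul_pe, if_neg hij, map_zero]
  idem i := by rw [← map_mul, pe_mul_pe, if_pos rfl]
  total := by rw [← map_sum, sum_pe, map_one]
  ea i := by rw [← map_mul, pe_mul_pa]
  ae i := by rw [← map_mul, pa_mul_pe]
  eb i := by rw [← map_mul, pe_mul_pb]
  be i := by rw [← map_mul, pb_mul_pe]
  row := hrow
  col := hcol
  comm := hcomm

lemma quot_span_top {q : ZMod m → K}
    (h : IsModel q (fun i => RingQuot.mkAlgHom K rel (pe K m i))
      (fun i => RingQuot.mkAlgHom K rel (pa K m i))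
      (fun i => RingQuot.mkAlgHom K rel (pb K m i))) :
    Submodule.span K (Tset (fun i => RingQuot.mkAlgHom K rel (pe K m i))
      (fun i => RingQuot.mkAlgHom K rel (pa K m i))
      (fun i => RingQuot.mkAlgHom K rel (pb K m i))) = ⊤ := by
  rw [eq_top_iff]
  intro x hx
  clear hx
  obtain ⟨y, rfl⟩ := RingQuot.mkAlgHom_surjective K rel x
  obtain ⟨z, rfl⟩ := RingQuot.mkAlgHom_surjective K (PathRel K m) y
  induction z using FreeAlgebra.induction with
  | grade0 c =>
    rw [AlgHom.commutes, AlgHom.commutes, Algebra.algebraMap_eq_smul_one]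
    exact Submodule.smul_mem _ _ h.one_mem_span
  | grade1 g =>
    cases g with
    | e i => exact Submodule.subset_span (Or.inl (Or.inl (Or.inl ⟨i, rfl⟩)))
    | a i => exact Submodule.subset_span (Or.inl (Or.inl (Or.inr ⟨i, rfl⟩)))
    | abar i => exact Submodule.subset_span (Or.inl (Or.inr ⟨i, rfl⟩))
  | mul a b ha hb =>
    rw [map_mul, map_mul]
    exact h.mul_mem_span ha hb
  | add a b ha hb =>
    rw [map_add, map_add]
    exact add_mem ha hb

end PathLemmas

/-! ### The homomorphisms to the concrete algebra -/

section Homs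

variable {K : Type} [Field K] {m : ℕ} [NeZero m]

/-- Images of the generators. -/
def genMap (q : ZMod m → K) : Gen m → Zg K m q
  | .e i => Zg.zE K m q i
  | .a i => Zg.zA K m q i
  | .abar i => Zg.zB K m q i

def faZg (q : ZMod m → K) : FA K m →ₐ[K] Zg K m q := FreeAlgebra.lift K (genMap q)

@[simp] lemma faZg_Ee (q : ZMod m → K) (i : ZMod m) :
    faZg q (Ee K m i) = Zg.zE K m q i := FreeAlgebra.lift_ι_apply _ _
@[simp] lemma faZg_Aa (q : ZMod m → K) (i : ZMod m) :
    faZg q (Aa K m i) = Zg.zA K m q i := FreeAlgebra.lift_ι_apply _ _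
@[simp] lemma faZg_Bb (q : ZMod m → K) (i : ZMod m) :
    faZg q (Bb K m i) = Zg.zB K m q i := FreeAlgebra.lift_ι_apply _ _

lemma faZg_rel (q : ZMod m → K) : ∀ ⦃x y : FA K m⦄, PathRel K m x y → faZg q x = faZg q y := by
  intro x y hxy
  cases hxy with
  | orth i j hij => simp [Zg.zE_mul_zE, hij]
  | idem i => simp [Zg.zE_mul_zE]
  | total => simp [Zg.sum_zE]
  | asrc i => simp [Zg.zE_mul_zA]
  | atgt i => simp [Zg.zA_mul_zE]
  | bsrc i => simp [Zg.zE_mul_zB]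
  | btgt i => simp [Zg.zB_mul_zE]

def paZg (q : ZMod m → K) : PathAlg K m →ₐ[K] Zg K m q :=
  RingQuot.liftAlgHom K ⟨faZg q, faZg_rel q⟩

@[simp] lemma paZg_pe (q : ZMod m → K) (i : ZMod m) : paZg q (pe K m i) = Zg.zE K m q i := by
  rw [pe, paZg, RingQuot.liftAlgHom_mkAlgHom_apply, faZg_Ee]
@[simp] lemma paZg_pa (q : ZMod m → K) (i : ZMod m) : paZg q (pa K m i) = Zg.zA K m q i := by
  rw [pa, paZg, RingQuot.liftAlgHom_mkAlgHom_apply, faZg_Aa]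
@[simp] lemma paZg_pb (q : ZMod m → K) (i : ZMod m) : paZg q (pb K m i) = Zg.zB K m q i := by
  rw [pb, paZg, RingQuot.liftAlgHom_mkAlgHom_apply, faZg_Bb]

lemma paZg_lamRel (q : ZMod m → K) :
    ∀ ⦃x y : PathAlg K m⦄, LamRel K m q x y → paZg q x = paZg q y := by
  intro x y hxy
  cases hxy with
  | row i => simp [Zg.zA_mul_zA]
  | col i => simp [Zg.zB_mul_zB]
  | comm i => simp [Zg.zA_mul_zB, Zg.zB_mul_zA, sub_add_cancel]

/-- The canonical algebra map `Λ_q → Zg q`. -/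
def lamZg (q : ZMod m → K) : Lam K m q →ₐ[K] Zg K m q :=
  RingQuot.liftAlgHom K ⟨paZg q, paZg_lamRel q⟩

@[simp] lemma lamZg_lamE (q : ZMod m → K) (i : ZMod m) :
    lamZg q (lamE K m q i) = Zg.zE K m q i := by
  rw [lamE, lamZg, RingQuot.liftAlgHom_mkAlgHom_apply, paZg_pe]
@[simp] lemma lamZg_lamA (q : ZMod m → K) (i : ZMod m) :
    lamZg q (lamA K m q i) = Zg.zA K m q i := by
  rw [lamA, lamZg, RingQuot.liftAlgHom_mkAlgHom_apply, paZg_pa]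
@[simp] lemma lamZg_lamB (q : ZMod m → K) (i : ZMod m) :
    lamZg q (lamB K m q i) = Zg.zB K m q i := by
  rw [lamB, lamZg, RingQuot.liftAlgHom_mkAlgHom_apply, paZg_pb]

/-- For `Λ̃` with `b₂ = 0` we use the weights `q 0 = 1 - t b₁` and `q j = 1` otherwise. -/
def qq (m : ℕ) (b1 t : K) : ZMod m → K := fun i => if i = 0 then 1 - t * b1 else 1

lemma paZg_tildeRel (b1 t : K) :
    ∀ ⦃x y : PathAlg K m⦄, TildeRel K m b1 0 t x y →
      paZg (qq m b1 t) x = paZg (qq m b1 t) y := by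
  intro x y hxy
  cases hxy with
  | row i => rw [map_mul, paZg_pa, paZg_pa, Zg.zA_mul_zA, map_zero]
  | col i => rw [map_mul, paZg_pb, paZg_pb, Zg.zB_mul_zB, map_zero]
  | comm j hj => simp [Zg.zA_mul_zB, Zg.zB_mul_zA, sub_add_cancel, qq, hj]
  | comm0 => simp [Zg.zA_mul_zB, Zg.zB_mul_zA, qq]

/-- The canonical algebra map `Λ̃ → Zg (qq)`. -/
def tilZg (b1 t : K) : Tilde K m b1 0 t →ₐ[K] Zg K m (qq m b1 t) :=
  RingQuot.liftAlgHom K ⟨paZg (qq m b1 t), paZg_tildeRel b1 t⟩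

@[simp] lemma tilZg_tE (b1 t : K) (i : ZMod m) :
    tilZg b1 t (tE K m b1 0 t i) = Zg.zE K m (qq m b1 t) i := by
  rw [tE, tilZg, RingQuot.liftAlgHom_mkAlgHom_apply, paZg_pe]
@[simp] lemma tilZg_tA (b1 t : K) (i : ZMod m) :
    tilZg b1 t (tA K m b1 0 t i) = Zg.zA K m (qq m b1 t) i := by
  rw [tA, tilZg, RingQuot.liftAlgHom_mkAlgHom_apply, paZg_pa]
@[simp] lemma tilZg_tB (b1 t : K) (i : ZMod m) :
    tilZg b1 t (tB K m b1 0 t i) = Zg.zB K m (qq m b1 t) i := by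
  rw [tB, tilZg, RingQuot.liftAlgHom_mkAlgHom_apply, paZg_pb]

end Homs
/-! ### Identification of the quotient algebras with the concrete models -/

section Final

variable {K : Type} [Field K] {m : ℕ} [NeZero m]

lemma socAlg'_eq (R : Type) [Ring R] : socAlg' R = socAlg R := rfl

lemma lam_isModel (q : ZMod m → K) :
    IsModel q (lamE K m q) (lamA K m q) (lamB K m q) := by
  refine quot_isModel (LamRel K m q) q ?_ ?_ ?_
  · intro i
    have := RingQuot.mkAlgHom_rel K (LamRel.row (K := K) (m := m) (q := q) i)
    rwa [map_mul, map_zero] at this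
  · intro i
    have := RingQuot.mkAlgHom_rel K (LamRel.col (K := K) (m := m) (q := q) (i + 2))
    have h1 : (i : ZMod m) + 2 - 1 = i + 1 := by ring
    have h2 : (i : ZMod m) + 2 - 2 = i := by ring
    rwa [h1, h2, map_mul, map_zero] at this
  · intro i
    have := RingQuot.mkAlgHom_rel K (LamRel.comm (K := K) (m := m) (q := q) (i + 1))
    have h1 : (i : ZMod m) + 1 - 1 = i := by ring
    rw [h1, map_sub, map_smul, map_mul, map_mul, map_zero, sub_eq_zero] at this
    exact this.symm

lemma tilde_isModel (b1 t : K) :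
    IsModel (qq m b1 t) (tE K m b1 0 t) (tA K m b1 0 t) (tB K m b1 0 t) := by
  refine quot_isModel (TildeRel K m b1 0 t) (qq m b1 t) ?_ ?_ ?_
  · intro i
    have := RingQuot.mkAlgHom_rel K (TildeRel.row (K := K) (m := m) (b1 := b1) (b2 := 0)
      (t := t) i)
    rwa [map_mul, map_zero] at this
  · intro i
    have := RingQuot.mkAlgHom_rel K (TildeRel.col (K := K) (m := m) (b1 := b1) (b2 := 0)
      (t := t) (i + 2))
    have h1 : (i : ZMod m) + 2 - 1 = i + 1 := by ring
    have h2 : (i : ZMod m) + 2 - 2 = i := by ring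
    rwa [h1, h2, map_mul, map_zero] at this
  · intro i
    by_cases h0 : i + 1 = 0
    · have hi : i = -1 := eq_neg_of_add_eq_zero_left h0
      subst hi
      have := RingQuot.mkAlgHom_rel K (TildeRel.comm0 (K := K) (m := m) (b1 := b1) (b2 := 0)
        (t := t))
      rw [mul_zero, zero_smul, sub_zero, map_sub, map_smul, map_mul, map_mul, map_zero,
        sub_eq_zero] at this
      rw [neg_add_cancel, qq, if_pos rfl]
      exact this.symm
    · have := RingQuot.mkAlgHom_rel K (TildeRel.comm (K := K) (m := m) (b1 := b1) (b2 := 0)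
        (t := t) (i + 1) h0)
      have h1 : (i : ZMod m) + 1 - 1 = i := by ring
      rw [h1, mul_zero, zero_smul, sub_zero, map_sub, map_mul, map_mul, map_zero,
        sub_eq_zero] at this
      rw [qq, if_neg h0, one_smul]
      exact this.symm

/-- The algebra isomorphism `Λ_q ≅ Zg q`. -/
def lamEquiv (q : ZMod m → K) : Lam K m q ≃ₐ[K] Zg K m q :=
  AlgEquiv.ofBijective (lamZg q)
    (model_bijective (lamZg q) (quot_span_top (LamRel K m q) (lam_isModel q))
      (lamZg_lamE q) (lamZg_lamA q) (lamZg_lamB q))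

/-- The algebra isomorphism `Λ̃ ≅ Zg (qq)`. -/
def tilEquiv (b1 t : K) : Tilde K m b1 0 t ≃ₐ[K] Zg K m (qq m b1 t) :=
  AlgEquiv.ofBijective (tilZg b1 t)
    (model_bijective (tilZg b1 t) (quot_span_top (TildeRel K m b1 0 t) (tilde_isModel b1 t))
      (tilZg_tE b1 t) (tilZg_tA b1 t) (tilZg_tB b1 t))

lemma soc_iff_mem {R : Type} [Ring R] [Algebra K R] {q : ZMod m → K}
    (hq : ∀ i, q i ≠ 0) (e : R ≃ₐ[K] Zg K m q) (x : R) :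
    x ∈ socAlg R ↔ e x ∈ Zg.Wsub K m q := by
  have h1 : smap e.toRingEquiv (socAlg' R) = Zg.Wsub K m q :=
    (socAlg_transfer e.toRingEquiv).trans (Zg.socAlg_Zg hq)
  rw [← socAlg'_eq, ← h1, mem_smap]
  have hx : (e.toRingEquiv).symm (e.toRingEquiv x) = x := e.toRingEquiv.symm_apply_apply x
  have hx' : e.toRingEquiv x = e x := rfl
  rw [← hx', hx]

/-- The common quotient: `socQuot K R ≅ Cg` for any algebra isomorphic to a `Zg q`. -/
lemma socQuot_equiv_Cg {R : Type} [Ring R] [Algebra K R] {q : ZMod m → K}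
    (hq : ∀ i, q i ≠ 0) (e : R ≃ₐ[K] Zg K m q) :
    Nonempty (socQuot K R ≃ₐ[K] Cg K m) := by
  set π : R →ₐ[K] Cg K m := (zgProj K m q).comp e.toAlgHom with hπdef
  have hπ : ∀ ⦃x y : R⦄, (fun x y : R => x - y ∈ socAlg R) x y → π x = π y := by
    intro x y hxy
    have h0 : π (x - y) = 0 := by
      show zgProj K m q (e.toAlgHom (x - y)) = 0
      rw [zgProj_eq_zero_iff]
      exact (soc_iff_mem hq e _).1 hxy
    rw [map_sub, sub_eq_zero] at h0
    exact h0
  set Φ : socQuot K R →ₐ[K] Cg K m := RingQuot.liftAlgHom K ⟨π, hπ⟩ with hΦdef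
  have hΦmk : ∀ x : R, Φ (RingQuot.mkAlgHom K _ x) = π x := by
    intro x
    rw [hΦdef, RingQuot.liftAlgHom_mkAlgHom_apply]
  have hsurj : Function.Surjective Φ := by
    intro y
    obtain ⟨z, hz⟩ := zgProj_surjective K m q y
    refine ⟨RingQuot.mkAlgHom K _ (e.symm z), ?_⟩
    rw [hΦmk]
    show zgProj K m q (e (e.symm z)) = y
    rw [AlgEquiv.apply_symm_apply]
    exact hz
  have hinj : Function.Injective Φ := by
    intro u v huv
    obtain ⟨x, rfl⟩ := RingQuot.mkAlgHom_surjective K _ u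
    obtain ⟨y, rfl⟩ := RingQuot.mkAlgHom_surjective K _ v
    rw [hΦmk, hΦmk] at huv
    apply RingQuot.mkAlgHom_rel K
    show x - y ∈ socAlg R
    rw [soc_iff_mem hq e]
    rw [← zgProj_eq_zero_iff]
    show zgProj K m q (e.toAlgHom (x - y)) = 0
    rw [map_sub, map_sub, sub_eq_zero]
    exact huv
  exact ⟨AlgEquiv.ofBijective Φ ⟨hinj, hsurj⟩⟩

end Final

/-- for `m ≥ 4`, `b₂ = 0` and `t b₁ ≠ 1`, the socle of `Λ̃` is the `K`-span of
the elements `a_i ā_i`, and `Λ̃/soc(Λ̃) ≅ Λ/soc(Λ)` as `K`-algebras, so `Λ̃` is a socle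
deformation of `Λ`. -/
theorem tilde_socle_deformation_of_b2_eq_zero
    (K : Type) [Field K] (m : ℕ) [NeZero m] (hm : 4 ≤ m)
    (b1 t : K) (h : t * b1 ≠ 1) :
    Submodule.restrictScalars K (socAlg (Tilde K m b1 0 t)) =
        Submodule.span K {x : Tilde K m b1 0 t | ∃ i : ZMod m,
          x = tA K m b1 0 t i * tB K m b1 0 t i} ∧
    Nonempty (socQuot K (Tilde K m b1 0 t) ≃ₐ[K] socQuot K (Lam K m (fun _ => 1))) := by
  have hq : ∀ i : ZMod m, qq m b1 t i ≠ 0 := by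
    intro i
    rw [qq]
    split_ifs
    · exact sub_ne_zero_of_ne fun hh => h hh.symm
    · exact one_ne_zero
  have hq1 : ∀ i : ZMod m, (fun _ : ZMod m => (1 : K)) i ≠ 0 := fun _ => one_ne_zero
  set eT := tilEquiv (K := K) (m := m) b1 t with heT
  have hAB : ∀ i : ZMod m,
      eT (tA K m b1 0 t i * tB K m b1 0 t i) = Zg.zZ K m (qq m b1 t) i := by
    intro i
    rw [map_mul]
    show tilZg b1 t (tA K m b1 0 t i) * tilZg b1 t (tB K m b1 0 t i) = _
    rw [tilZg_tA, tilZg_tB, Zg.zA_mul_zB, if_pos rfl]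
  constructor
  · ext x
    simp only [Submodule.restrictScalars_mem]
    rw [soc_iff_mem hq eT x]
    have hWiff : ∀ y : Zg K m (qq m b1 t), y ∈ Zg.Wsub K m (qq m b1 t) ↔
        y ∈ Submodule.span K (Set.range (Zg.zZ K m (qq m b1 t))) := by
      intro y
      rw [← Zg.restrictScalars_Wsub]
      exact Iff.rfl
    rw [hWiff]
    have himg : ⇑eT.toLinearMap ''
        {x : Tilde K m b1 0 t | ∃ i, x = tA K m b1 0 t i * tB K m b1 0 t i}
        = Set.range (Zg.zZ K m (qq m b1 t)) := by
      ext y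
      constructor
      · rintro ⟨x, ⟨i, rfl⟩, rfl⟩
        exact ⟨i, (hAB i).symm⟩
      · rintro ⟨i, rfl⟩
        exact ⟨_, ⟨i, rfl⟩, hAB i⟩
    rw [← himg, Submodule.span_image]
    constructor
    · intro hw
      rw [Submodule.mem_map] at hw
      obtain ⟨y, hy, hyx⟩ := hw
      have hyx' : y = x := eT.injective hyx
      exact hyx' ▸ hy
    · intro hx
      exact Submodule.mem_map_of_mem hx
  · obtain ⟨E1⟩ := socQuot_equiv_Cg (R := Tilde K m b1 0 t) hq eT
    obtain ⟨E2⟩ := socQuot_equiv_Cg (R := Lam K m (fun _ => 1)) hq1 (lamEquiv (K := K) (m := m) (fun _ => 1))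
    exact ⟨E1.trans E2.symm⟩
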